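/- (Difference-type reverse inequality, operator form) Let A and B be positive invertible elements of a unital C*-algebra satisfying m·1 ≤ A ≤ B ≤ M·1 ≤ 1 for real numbers 0 < m ≤ M ≤ 1, set h = M/m, and let λ ∈ [0,1]. Then A ♯_λ B ≤ (1-λ)A + λB ≤ A ♯_λ B + λ(1-λ)(log h)² · B, where A ♯_λ B = B^{1/2} (B^{-1/2} A B^{-1/2})^{1-λ} B^{1/2}. -/

import Mathlib

open scoped NNReal

lemma scalar1 {lam x : ℝ} (hl0 : 0 ≤ lam) (hl1 : lam ≤ 1) (hx : 0 ≤ x) :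
    x ^ (1 - lam) ≤ (1 - lam) * x + lam := by
  have := Real.geom_mean_le_arith_mean2_weighted (by linarith : (0:ℝ) ≤ 1 - lam) hl0 hx
    (zero_le_one) (by ring)
  simpa using this

lemma scalar2 {lam x L : ℝ} (hl0 : 0 ≤ lam) (hl1 : lam ≤ 1) (hL : 0 ≤ L)
    (hx1 : x ≤ 1) (hxL : Real.exp (-L) ≤ x) :
    (1 - lam) * x + lam ≤ x ^ (1 - lam) + lam * (1 - lam) * L ^ 2 := by
  have hx0 : 0 < x := lt_of_lt_of_le (Real.exp_pos _) hxL
  obtain ⟨s, hs0, hsL, hxE, hFx⟩ : ∃ s, 0 ≤ s ∧ s ≤ L ∧ x = Real.exp (-s) ∧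
      x ^ (1 - lam) = Real.exp (-(s * (1 - lam))) := by
    refine ⟨-Real.log x, ?_, ?_, ?_, ?_⟩
    · have := Real.log_nonpos hx0.le hx1
      linarith
    · have : -L ≤ Real.log x := by
        have := Real.log_le_log (Real.exp_pos _) hxL
        simpa [Real.log_exp] using this
      linarith
    · rw [neg_neg, Real.exp_log hx0]
    · rw [Real.rpow_def_of_pos hx0]; ring_nf
  rw [hFx, hxE]
  have hEpos : (0:ℝ) < Real.exp (-s) := Real.exp_pos _
  have hE1 : Real.exp (-s) ≤ 1 := Real.exp_le_one_iff.2 (by linarith)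
  have step1 : Real.exp (-s) * (1 + s * lam) ≤ Real.exp (-(s * (1 - lam))) := by
    have h1 : s * lam + 1 ≤ Real.exp (s * lam) := Real.add_one_le_exp _
    have h2 : Real.exp (-(s * (1 - lam))) = Real.exp (-s) * Real.exp (s * lam) := by
      rw [← Real.exp_add]; ring_nf
    rw [h2]
    nlinarith [hEpos]
  have step2 : 1 - s * (1 - lam) ≤ Real.exp (-(s * (1 - lam))) := by
    have := Real.add_one_le_exp (-(s * (1 - lam)))
    linarith
  have h3 : 1 - Real.exp (-s) ≤ s := by
    have := Real.add_one_le_exp (-s)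
    linarith
  have hml : (0:ℝ) ≤ lam * (1 - lam) := mul_nonneg hl0 (by linarith)
  have key : (1 - lam) * Real.exp (-s) + lam - Real.exp (-(s * (1 - lam))) ≤
      lam * (1 - lam) * (s * (1 - Real.exp (-s))) := by
    nlinarith [mul_le_mul_of_nonneg_left step1 (by linarith : (0:ℝ) ≤ 1 - lam),
      mul_le_mul_of_nonneg_left step2 hl0]
  have h4 : lam * (1 - lam) * (s * (1 - Real.exp (-s))) ≤ lam * (1 - lam) * (s * s) :=
    mul_le_mul_of_nonneg_left (by nlinarith) hml
  have h5 : lam * (1 - lam) * (s * s) ≤ lam * (1 - lam) * L ^ 2 := by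
    have hss : s * s ≤ L ^ 2 := by nlinarith
    exact mul_le_mul_of_nonneg_left hss hml
  linarith

/-- **Difference-type reverse inequality (operator form).** Let `A`, `B` be positive invertible
elements of a unital C*-algebra with `m·1 ≤ A ≤ B ≤ M·1 ≤ 1` for reals `0 < m ≤ M ≤ 1`,
set `h = M/m`, and let `λ ∈ [0,1]`. Then
`A ♯_λ B ≤ (1-λ)A + λB ≤ A ♯_λ B + λ(1-λ)(log h)² · B`, where
`A ♯_λ B = B^(1/2) (B^(-1/2) A B^(-1/2))^(1-λ) B^(1/2)`. -/
theorem stmt_9 {𝒜 : Type*} [CStarAlgebra 𝒜] [PartialOrder 𝒜] [StarOrderedRing 𝒜]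
    (A B : 𝒜) (hA : 0 ≤ A) (hB : 0 ≤ B) (hAunit : IsUnit A) (hBunit : IsUnit B)
    (m M h lam : ℝ) (hm : 0 < m) (hmM : m ≤ M) (hM1 : M ≤ 1) (hh : h = M / m)
    (hmA : m • (1 : 𝒜) ≤ A) (hAB : A ≤ B) (hBM : B ≤ M • (1 : 𝒜))
    (hlam : lam ∈ Set.Icc (0 : ℝ) 1) :
    B ^ ((1 : ℝ) / 2) * (B ^ (-(1 : ℝ) / 2) * A * B ^ (-(1 : ℝ) / 2)) ^ (1 - lam) *
        B ^ ((1 : ℝ) / 2) ≤ (1 - lam) • A + lam • B ∧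
      (1 - lam) • A + lam • B ≤
        B ^ ((1 : ℝ) / 2) * (B ^ (-(1 : ℝ) / 2) * A * B ^ (-(1 : ℝ) / 2)) ^ (1 - lam) *
            B ^ ((1 : ℝ) / 2) +
          (lam * (1 - lam) * (Real.log h) ^ 2) • B := by
  obtain ⟨hl0, hl1⟩ := hlam
  have hM0 : 0 < M := lt_of_lt_of_le hm hmM
  set c : ℝ := lam * (1 - lam) * (Real.log h) ^ 2 with hc
  have hBz : (0:ℝ≥0) ∉ spectrum ℝ≥0 B := spectrum.zero_notMem ℝ≥0 hBunit
  set S : 𝒜 := B ^ ((1 : ℝ) / 2) with hS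
  set Si : 𝒜 := B ^ (-(1 : ℝ) / 2) with hSi
  have hSi' : Si = B ^ (-((1:ℝ)/2)) := by
    rw [hSi, show (-(1:ℝ)/2) = -((1:ℝ)/2) from by norm_num]
  have hSSi : S * Si = 1 := by
    rw [hS, hSi']; exact CFC.rpow_mul_rpow_neg _ (hBunit.isStrictlyPositive hB)
  have hSiS : Si * S = 1 := by
    rw [hS, hSi']; exact CFC.rpow_neg_mul_rpow _ (hBunit.isStrictlyPositive hB)
  have hSS : S * S = B := by
    rw [hS, ← CFC.rpow_add hBunit, show (1:ℝ)/2 + 1/2 = 1 by norm_num, CFC.rpow_one B hB]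
  have hSsa : IsSelfAdjoint S := IsSelfAdjoint.of_nonneg CFC.rpow_nonneg
  have hSisa : IsSelfAdjoint Si := IsSelfAdjoint.of_nonneg CFC.rpow_nonneg
  set T : 𝒜 := Si * A * Si with hT
  have conjSi : ∀ {X Y : 𝒜}, X ≤ Y → Si * X * Si ≤ Si * Y * Si := fun hXY => by
    simpa only [hSisa.star_eq] using star_left_conjugate_le_conjugate hXY Si
  have conjS : ∀ {X Y : 𝒜}, X ≤ Y → S * X * S ≤ S * Y * S := fun hXY => by
    simpa only [hSsa.star_eq] using star_left_conjugate_le_conjugate hXY S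
  have hTnn : 0 ≤ T := by
    rw [hT]
    simpa only [hSisa.star_eq] using star_left_conjugate_nonneg hA Si
  have hTsa : IsSelfAdjoint T := .of_nonneg hTnn
  have hSiBSi : Si * B * Si = 1 := by
    rw [← hSS, show Si * (S * S) * Si = (Si * S) * (S * Si) by simp only [mul_assoc], hSiS,
      hSSi, one_mul]
  have hT1 : T ≤ 1 := by
    have := conjSi hAB
    rwa [hSiBSi] at this
  have hmB : (m / M) • B ≤ A := by
    have h1 : (m / M) • B ≤ (m / M) • (M • (1:𝒜)) :=
      smul_le_smul_of_nonneg_left hBM (le_of_lt (div_pos hm hM0))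
    have h2 : (m / M) • (M • (1:𝒜)) = m • (1:𝒜) := by
      rw [smul_smul]; congr 1; field_simp
    rw [h2] at h1
    exact h1.trans hmA
  have hTm : (m / M) • (1:𝒜) ≤ T := by
    have := conjSi hmB
    rwa [mul_smul_comm, smul_mul_assoc, hSiBSi] at this
  have hmM' : (0:ℝ) < m / M := div_pos hm hM0
  have hspec_lo : ∀ x ∈ spectrum ℝ T, m / M ≤ x := by
    refine (algebraMap_le_iff_le_spectrum (R := ℝ) (a := T) hTsa).mp ?_
    rwa [Algebra.algebraMap_eq_smul_one]
  have hspec_hi : ∀ x ∈ spectrum ℝ T, x ≤ 1 := (CFC.le_one_iff (R := ℝ) T hTsa).mp hT1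
  have hcont : ContinuousOn (fun x : ℝ => x ^ (1 - lam)) (spectrum ℝ T) := fun x hx =>
    (Real.continuousAt_rpow_const x _
      (Or.inl (lt_of_lt_of_le hmM' (hspec_lo x hx)).ne')).continuousWithinAt
  have hTrpow : T ^ (1 - lam) = cfc (fun x : ℝ => x ^ (1 - lam)) T := by
    rw [CFC.rpow_def, cfc_nnreal_eq_real _ _ hTnn]
    apply cfc_congr
    intro x hx
    have hx0 : 0 ≤ x := (lt_of_lt_of_le hmM' (hspec_lo x hx)).le
    simp only [NNReal.coe_rpow, Real.coe_toNNReal x hx0]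
  have hlin : cfc (fun x : ℝ => (1 - lam) * x + lam) T = (1 - lam) • T + lam • (1:𝒜) := by
    rw [cfc_add T (fun x => (1 - lam) * x) (fun _ => lam) (by fun_prop) (by fun_prop),
      cfc_const_mul (1 - lam) (fun x : ℝ => x) T (by fun_prop), cfc_id' ℝ T,
      cfc_const lam T, Algebra.algebraMap_eq_smul_one]
  have hconst : cfc (fun x : ℝ => x ^ (1 - lam) + c) T = T ^ (1 - lam) + c • (1:𝒜) := by
    rw [cfc_add T (fun x : ℝ => x ^ (1 - lam)) (fun _ => c) hcont (by fun_prop),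
      cfc_const c T, ← hTrpow, Algebra.algebraMap_eq_smul_one]
  have key1 : T ^ (1 - lam) ≤ (1 - lam) • T + lam • (1:𝒜) := by
    rw [hTrpow, ← hlin]
    exact cfc_mono (fun x hx => scalar1 hl0 hl1 (lt_of_lt_of_le hmM' (hspec_lo x hx)).le)
      hcont (by fun_prop)
  have hL0 : 0 ≤ Real.log h := by
    apply Real.log_nonneg
    rw [hh]
    exact (one_le_div hm).mpr hmM
  have hexp : Real.exp (-Real.log h) = m / M := by
    have hh0 : 0 < h := by rw [hh]; positivity
    rw [Real.exp_neg, Real.exp_log hh0, hh, inv_div]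
  have key2 : (1 - lam) • T + lam • (1:𝒜) ≤ T ^ (1 - lam) + c • (1:𝒜) := by
    rw [← hlin, ← hconst]
    refine cfc_mono (fun x hx => ?_) (by fun_prop) (ContinuousOn.add hcont (by fun_prop))
    exact scalar2 hl0 hl1 hL0 (hspec_hi x hx) (hexp ▸ hspec_lo x hx)
  have hSTS : S * T * S = A := by
    rw [hT, show S * (Si * A * Si) * S = (S * Si) * A * (Si * S) by simp only [mul_assoc],
      hSSi, hSiS, one_mul, mul_one]
  have hRHS : S * ((1 - lam) • T + lam • (1:𝒜)) * S = (1 - lam) • A + lam • B := by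
    rw [mul_add, add_mul, mul_smul_comm, smul_mul_assoc, mul_smul_comm, smul_mul_assoc,
      hSTS, mul_one, hSS]
  have hRHS2 : S * (T ^ (1 - lam) + c • (1:𝒜)) * S = S * T ^ (1 - lam) * S + c • B := by
    rw [mul_add, add_mul, mul_smul_comm, smul_mul_assoc, mul_one, hSS]
  constructor
  · have := conjS key1
    rwa [hRHS] at this
  · have := conjS key2
    rwa [hRHS, hRHS2] at this
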